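/- Let K ≥ 3 and let A = {i : 3 ≤ i ≤ K and T(i+1) − α·T(i) > 0}, and set n = ∑_{i∈A} T(i). Then A is a Tribonacci representation set (so it is the Tribonacci representation of n), and n is a positive record: for every integer m with 1 ≤ m < n, out(m) − α·m < (∑_{i∈A} T(i+1)) − α·n. -/

import Mathlib

/-- The Tribonacci sequence: T(0)=0, T(1)=0, T(2)=1,
    T(n+3) = T(n+2) + T(n+1) + T(n). -/
def trib : ℕ → ℕ
  | 0 => 0
  | 1 => 0
  | 2 => 1
  | n + 3 => trib (n + 2) + trib (n + 1) + trib n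

/-- A Tribonacci representation set: a finite set of naturals, all at least 3,
    containing no three consecutive integers. -/
def IsTribRep (S : Finset ℕ) : Prop :=
  (∀ i ∈ S, 3 ≤ i) ∧ ∀ i : ℕ, ¬(i ∈ S ∧ i + 1 ∈ S ∧ i + 2 ∈ S)

lemma alpha_gt_one (α : ℝ) (hα : α ^ 3 = α ^ 2 + α + 1) : 1 < α := by
  by_contra h
  push_neg at h
  nlinarith [sq_nonneg α, sq_nonneg (α + 1), sq_nonneg (α - 1)]

lemma trib_mono : Monotone trib := by
  apply monotone_nat_of_le_succ
  intro n
  match n with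
  | 0 => simp [trib]
  | 1 => simp [trib]
  | n + 2 => show trib (n+2) ≤ trib (n+3); rw [trib]; omega

lemma isTribRep_subset {S T : Finset ℕ} (h : S ⊆ T) (hT : IsTribRep T) : IsTribRep S :=
  ⟨fun i hi => hT.1 i (h hi), fun i hi => hT.2 i ⟨h hi.1, h hi.2.1, h hi.2.2⟩⟩

lemma trib_rec (K : ℕ) (h : 3 ≤ K) : trib (K + 1) = trib K + trib (K - 1) + trib (K - 2) := by
  obtain ⟨n, rfl⟩ : ∃ n, K = n + 3 := ⟨K - 3, by omega⟩
  simp only [show n + 3 - 1 = n + 2 from by omega, show n + 3 - 2 = n + 1 from by omega,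
    show n + 3 + 1 = (n + 1) + 3 from by omega]
  rw [trib]

lemma trib_sum_lt : ∀ K : ℕ, 1 ≤ K → ∀ S : Finset ℕ, IsTribRep S →
    (∀ i ∈ S, i ≤ K) → ∑ i ∈ S, trib i < trib (K + 1) := by
  intro K
  induction K using Nat.strong_induction_on with
  | _ K IH =>
    intro hK S hS hSK
    by_cases hKS : K ∈ S
    · have hK3 : 3 ≤ K := hS.1 K hKS
      by_cases hK1S : K - 1 ∈ S
      · -- K, K-1 ∈ S, so K-2 ∉ S; all other elements ≤ K - 3
        have hK13 : 3 ≤ K - 1 := hS.1 _ hK1S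
        have hK4 : 4 ≤ K := by omega
        have hK2S : K - 2 ∉ S := by
          intro hmem
          exact hS.2 (K - 2) ⟨hmem, by
            have : K - 2 + 1 = K - 1 := by omega
            rw [this]; exact hK1S, by
            have : K - 2 + 2 = K := by omega
            rw [this]; exact hKS⟩
        set S' := (S.erase K).erase (K - 1) with hS'
        have hsub : S' ⊆ S := (Finset.erase_subset _ _).trans (Finset.erase_subset _ _)
        have hS'rep : IsTribRep S' := isTribRep_subset hsub hS
        have hS'le : ∀ i ∈ S', i ≤ K - 3 := by
          intro i hi
          have h1 : i ≠ K - 1 := Finset.ne_of_mem_erase hi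
          have h2 : i ≠ K := Finset.ne_of_mem_erase (Finset.mem_of_mem_erase hi)
          have h3 : i ≠ K - 2 := by rintro rfl; exact hK2S (hsub hi)
          have := hSK i (hsub hi); omega
        have hind : ∑ i ∈ S', trib i < trib (K - 2) := by
          have := IH (K - 3) (by omega) (by omega) S' hS'rep hS'le
          have he : K - 3 + 1 = K - 2 := by omega
          rwa [he] at this
        have hsum : ∑ i ∈ S, trib i = trib K + trib (K - 1) + ∑ i ∈ S', trib i := by
          rw [← Finset.add_sum_erase _ _ hKS,
              ← Finset.add_sum_erase _ _ (Finset.mem_erase.mpr ⟨by omega, hK1S⟩)]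
          ring
        have hrec : trib (K + 1) = trib K + trib (K - 1) + trib (K - 2) :=
          trib_rec K hK3
        omega
      · -- K ∈ S, K - 1 ∉ S
        set S' := S.erase K with hS'
        have hsub : S' ⊆ S := Finset.erase_subset _ _
        have hS'le : ∀ i ∈ S', i ≤ K - 2 := by
          intro i hi
          have h2 : i ≠ K := Finset.ne_of_mem_erase hi
          have h3 : i ≠ K - 1 := by rintro rfl; exact hK1S (hsub hi)
          have := hSK i (hsub hi); omega
        have hind : ∑ i ∈ S', trib i < trib (K - 1) := by
          have := IH (K - 2) (by omega) (by omega) S' (isTribRep_subset hsub hS) hS'le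
          have he : K - 2 + 1 = K - 1 := by omega
          rwa [he] at this
        have hsum : ∑ i ∈ S, trib i = trib K + ∑ i ∈ S', trib i :=
          (Finset.add_sum_erase _ _ hKS).symm
        have hrec : trib (K + 1) = trib K + trib (K - 1) + trib (K - 2) :=
          trib_rec K hK3
        omega
    · -- K ∉ S
      by_cases h1 : K = 1
      · subst h1
        have : S = ∅ := by
          rw [Finset.eq_empty_iff_forall_notMem]
          intro i hi
          have := hS.1 i hi; have := hSK i hi; omega
        simp [this, trib]
      · have hind := IH (K - 1) (by omega) (by omega) S hS (by
          intro i hi; have := hSK i hi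
          have : i ≠ K := by rintro rfl; exact hKS hi
          omega)
        have : trib (K - 1 + 1) ≤ trib (K + 1) := trib_mono (by omega)
        omega

lemma no_three_pos (α : ℝ) (hα : α ^ 3 = α ^ 2 + α + 1) (h1 : 1 < α) (i : ℕ)
    (p0 : 0 < (trib (i + 1) : ℝ) - α * trib i)
    (p1 : 0 < (trib (i + 2) : ℝ) - α * trib (i + 1))
    (p2 : 0 < (trib (i + 3) : ℝ) - α * trib (i + 2)) : False := by
  have hrec : (trib (i + 3) : ℝ) = trib (i + 2) + trib (i + 1) + trib i := by
    rw [trib]; push_cast; ring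
  set a := (trib i : ℝ)
  set b := (trib (i + 1) : ℝ)
  set c := (trib (i + 2) : ℝ)
  rw [hrec] at p2
  have key : α * (a + b + c - α * c) = (α - α ^ 2) * (c - α * b) - (b - α * a) := by
    nlinarith [hα]
  nlinarith [mul_pos (show (0:ℝ) < α by linarith) p2,
    mul_pos (mul_pos (show (0:ℝ) < α - 1 by linarith) (show (0:ℝ) < α by linarith)) p1]

lemma sum_cast_sub (α : ℝ) (S : Finset ℕ) :
    (↑(∑ i ∈ S, trib (i + 1)) : ℝ) - α * ↑(∑ i ∈ S, trib i) =
      ∑ i ∈ S, ((trib (i + 1) : ℝ) - α * trib i) := by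
  rw [Finset.sum_sub_distrib]
  push_cast
  rw [Finset.mul_sum]

/-- For `K ≥ 3`, the set `A = {i : 3 ≤ i ≤ K, T(i+1) − α·T(i) > 0}` is a
    Tribonacci representation set, and `n = ∑_{i∈A} T(i)` is a positive record. -/
theorem sum_of_positive_indices_is_record (α : ℝ) (hα : α ^ 3 = α ^ 2 + α + 1)
    (K : ℕ) (hK : 3 ≤ K) (A : Finset ℕ)
    (hA : ∀ i : ℕ, i ∈ A ↔ 3 ≤ i ∧ i ≤ K ∧ 0 < (trib (i + 1) : ℝ) - α * trib i) :
    IsTribRep A ∧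
      ∀ m : ℕ, 1 ≤ m → m < ∑ i ∈ A, trib i →
        ∀ Sm : Finset ℕ, IsTribRep Sm → m = ∑ i ∈ Sm, trib i →
          (↑(∑ i ∈ Sm, trib (i + 1)) : ℝ) - α * m <
            (↑(∑ i ∈ A, trib (i + 1)) : ℝ) - α * (∑ i ∈ A, trib i) := by
  have h1 : 1 < α := alpha_gt_one α hα
  have hArep : IsTribRep A := by
    constructor
    · intro i hi; exact ((hA i).mp hi).1
    · rintro i ⟨hi0, hi1, hi2⟩
      have p0 := ((hA i).mp hi0).2.2
      have p1 := ((hA (i + 1)).mp hi1).2.2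
      have p2 := ((hA (i + 2)).mp hi2).2.2
      rw [show i + 2 + 1 = i + 3 from rfl] at p2
      exact no_three_pos α hα h1 i p0 p1 p2
  refine ⟨hArep, ?_⟩
  intro m hm1 hmn Sm hSm hmeq
  -- All elements of Sm are ≤ K
  have hSmK : ∀ i ∈ Sm, i ≤ K := by
    intro j hj
    by_contra hjK
    push_neg at hjK
    have hAlt : ∑ i ∈ A, trib i < trib (K + 1) :=
      trib_sum_lt K (by omega) A hArep (fun i hi => ((hA i).mp hi).2.1)
    have h1j : trib (K + 1) ≤ trib j := trib_mono (by omega)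
    have h2j : trib j ≤ ∑ i ∈ Sm, trib i :=
      Finset.single_le_sum (fun i _ => Nat.zero_le _) hj
    omega
  -- rewrite both sides as sums of g i := trib(i+1) - α * trib i
  rw [hmeq, sum_cast_sub, sum_cast_sub]
  set g : ℕ → ℝ := fun i => (trib (i + 1) : ℝ) - α * trib i with hg
  -- there is an element of A not in Sm
  have hex : ∃ a ∈ A, a ∉ Sm := by
    by_contra h
    push_neg at h
    have : ∑ i ∈ A, trib i ≤ ∑ i ∈ Sm, trib i :=
      Finset.sum_le_sum_of_subset h
    omega
  obtain ⟨a, haA, haSm⟩ := hex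
  have hstep1 : ∑ i ∈ Sm, g i ≤ ∑ i ∈ Sm ∩ A, g i := by
    have hsplit : ∑ i ∈ Sm ∩ A, g i + ∑ i ∈ Sm \ A, g i = ∑ i ∈ Sm, g i :=
      Finset.sum_inter_add_sum_sdiff Sm A g
    have hnonpos : ∑ i ∈ Sm \ A, g i ≤ 0 := by
      apply Finset.sum_nonpos
      intro i hi
      rw [Finset.mem_sdiff] at hi
      have h3i : 3 ≤ i := hSm.1 i hi.1
      have hiK : i ≤ K := hSmK i hi.1
      have : ¬(0 < g i) := fun hpos => hi.2 ((hA i).mpr ⟨h3i, hiK, hpos⟩)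
      linarith
    linarith
  have hstep2 : ∑ i ∈ Sm ∩ A, g i < ∑ i ∈ A, g i := by
    apply Finset.sum_lt_sum_of_subset (Finset.inter_subset_right) haA
      (fun h => haSm (Finset.mem_inter.mp h).1) ((hA a).mp haA).2.2
    intro j hjA _
    exact le_of_lt ((hA j).mp hjA).2.2
  linarith
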